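/- Let H be a real Hilbert space, A, B ∈ Conv_H, and x, y ∈ H. Then ‖Proj_A(x) − Proj_B(y)‖² − ‖x − y‖² ≤ 2·dist(x,A)·e(B,A) + 2·dist(y,B)·e(A,B). -/

import Mathlib

open Filter Metric Set MeasureTheory Topology Function
open scoped ENNReal NNReal

variable {H : Type*} [NormedAddCommGroup H] [InnerProductSpace ℝ H]

/-- A nonempty closed convex subset of `H` (an element of `Conv_H`). -/
def IsConvexBody (K : Set H) : Prop := K.Nonempty ∧ IsClosed K ∧ Convex ℝ K

/-- The excess `e(A,B) = sup_{x ∈ A} dist(x,B)` of `A` over `B`. -/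
noncomputable def excess (A B : Set H) : ℝ≥0∞ := ⨆ x ∈ A, EMetric.infEdist x B

/-- The retraction `ret(C,J)` of the moving set `C` on `J`. -/
noncomputable def ret (C : ℝ → Set H) (J : Set ℝ) : ℝ≥0∞ :=
  ⨆ (m : ℕ) (t : Fin (m + 1) → ℝ) (_ : StrictMono t) (_ : ∀ i, t i ∈ J),
    ∑ i : Fin m, excess (C (t (Fin.castSucc i))) (C (t (Fin.succ i)))

/-- `C` has locally bounded retraction on `[0,∞)`. -/
def LocBddRet (C : ℝ → Set H) : Prop := ∀ a b : ℝ, 0 ≤ a → ret C (Icc a b) ≠ ⊤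

/-- The pointwise variation of `f` on `J`. -/
noncomputable def pVar (f : ℝ → H) (J : Set ℝ) : ℝ≥0∞ :=
  ⨆ (m : ℕ) (t : Fin (m + 1) → ℝ) (_ : StrictMono t) (_ : ∀ i, t i ∈ J),
    ∑ i : Fin m, edist (f (t (Fin.castSucc i))) (f (t (Fin.succ i)))

/-- `f` has locally bounded variation on `[0,∞)`. -/
def LocBV (f : ℝ → H) : Prop := ∀ a b : ℝ, 0 ≤ a → pVar f (Icc a b) ≠ ⊤

/-- The exterior normal cone `N_K(x)`. -/
def normalCone (K : Set H) (x : H) : Set H :=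
  {u : H | ∀ v ∈ K, (inner ℝ (v - x) u : ℝ) ≤ 0}

/-- `p` is the metric projection of `x` onto `K`. -/
def IsProj (K : Set H) (x p : H) : Prop :=
  p ∈ K ∧ ∀ v ∈ K, ‖x - p‖ ≤ ‖x - v‖

/-- `C(t+) = {x : dist(x, C(s)) → 0 as s → t+}`. -/
def rightLimSet (C : ℝ → Set H) (t : ℝ) : Set H :=
  {x : H | Tendsto (fun s => infDist x (C s)) (𝓝[>] t) (𝓝 0)}

/-- `C(t−)`, with the convention `C(0−) := C(0)`. -/
noncomputable def leftLimSet (C : ℝ → Set H) (t : ℝ) : Set H :=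
  if t = 0 then C 0 else {x : H | Tendsto (fun s => infDist x (C s)) (𝓝[<] t) (𝓝 0)}

/-- The continuity set of `C` with respect to the excess. -/
noncomputable def contSet (C : ℝ → Set H) : Set ℝ :=
  {t | excess (C t) (rightLimSet C t) = 0 ∧ excess (leftLimSet C t) (C t) = 0}


lemma isProj_inner_le {K : Set H} (hK : Convex ℝ K) {x p : H} (hp : IsProj K x p) :
    ∀ v ∈ K, (inner ℝ (x - p) (v - p) : ℝ) ≤ 0 := by
  have hb : BddBelow (Set.range fun w : K => ‖x - (w : H)‖) :=
    ⟨0, fun r ⟨w, hw⟩ => hw ▸ norm_nonneg _⟩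
  haveI : Nonempty K := ⟨⟨p, hp.1⟩⟩
  have hinf : ‖x - p‖ = ⨅ w : K, ‖x - (w : H)‖ :=
    le_antisymm (le_ciInf fun w => hp.2 w w.2) (ciInf_le hb (⟨p, hp.1⟩ : K))
  exact (norm_eq_iInf_iff_real_inner_le_zero hK hp.1).1 hinf

lemma isProj_infDist {K : Set H} {x p : H} (hp : IsProj K x p) :
    infDist x K = ‖x - p‖ := by
  refine le_antisymm (by simpa [dist_eq_norm] using infDist_le_dist_of_mem hp.1) ?_
  haveI : Nonempty K := ⟨⟨p, hp.1⟩⟩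
  rw [infDist_eq_iInf]
  exact le_ciInf fun w => by simpa [dist_eq_norm] using hp.2 w w.2

lemma exists_isProj [CompleteSpace H] {K : Set H} (hK : IsConvexBody K) (x : H) :
    ∃ p, IsProj K x p := by
  obtain ⟨hne, hcl, hconv⟩ := hK
  obtain ⟨v, hv, heq⟩ := exists_norm_eq_iInf_of_complete_convex hne
    (hcl.isComplete) hconv x
  refine ⟨v, hv, fun w hw => ?_⟩
  rw [heq]
  exact ciInf_le ⟨0, fun r ⟨w, hw⟩ => hw ▸ norm_nonneg _⟩ (⟨w, hw⟩ : K)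

lemma infEdist_le_excess {A B : Set H} {q : H} (hq : q ∈ B) :
    EMetric.infEdist q A ≤ excess B A :=
  le_iSup₂ (f := fun x (_ : x ∈ B) => EMetric.infEdist x A) q hq

/-- Moreau's estimate for projections onto two closed convex sets:
`‖Proj_A(x) − Proj_B(y)‖² − ‖x − y‖² ≤ 2 d(x,A) e(B,A) + 2 d(y,B) e(A,B)`. -/
theorem projection_excess_estimate
    [CompleteSpace H]
    (A B : Set H) (hA : IsConvexBody A) (hB : IsConvexBody B)
    (x y p q : H) (hp : IsProj A x p) (hq : IsProj B y q) :
    ENNReal.ofReal (‖p - q‖ ^ 2 - ‖x - y‖ ^ 2) ≤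
      2 * ENNReal.ofReal (infDist x A) * excess B A +
      2 * ENNReal.ofReal (infDist y B) * excess A B := by
  obtain ⟨q', hq'⟩ := exists_isProj hA q
  obtain ⟨p', hp'⟩ := exists_isProj hB p
  -- real estimate
  have key : ‖p - q‖ ^ 2 - ‖x - y‖ ^ 2 ≤
      2 * (infDist x A * infDist q A) + 2 * (infDist y B * infDist p B) := by
    have h1 : (inner ℝ (x - p) (q - p) : ℝ) ≤ ‖x - p‖ * ‖q - q'‖ := by
      have := isProj_inner_le hA.2.2 hp q' hq'.1
      have hdecomp : (inner ℝ (x - p) (q - p) : ℝ)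
          = inner ℝ (x - p) (q - q') + inner ℝ (x - p) (q' - p) := by
        rw [← inner_add_right]; congr 1; abel
      calc (inner ℝ (x - p) (q - p) : ℝ)
          = inner ℝ (x - p) (q - q') + inner ℝ (x - p) (q' - p) := hdecomp
        _ ≤ ‖x - p‖ * ‖q - q'‖ + 0 := add_le_add (real_inner_le_norm _ _) this
        _ = ‖x - p‖ * ‖q - q'‖ := by ring
    have h2 : (inner ℝ (y - q) (p - q) : ℝ) ≤ ‖y - q‖ * ‖p - p'‖ := by
      have := isProj_inner_le hB.2.2 hq p' hp'.1
      have hdecomp : (inner ℝ (y - q) (p - q) : ℝ)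
          = inner ℝ (y - q) (p - p') + inner ℝ (y - q) (p' - q) := by
        rw [← inner_add_right]; congr 1; abel
      calc (inner ℝ (y - q) (p - q) : ℝ)
          = inner ℝ (y - q) (p - p') + inner ℝ (y - q) (p' - q) := hdecomp
        _ ≤ ‖y - q‖ * ‖p - p'‖ + 0 := add_le_add (real_inner_le_norm _ _) this
        _ = ‖y - q‖ * ‖p - p'‖ := by ring
    have hexp : ‖x - y‖ ^ 2 = ‖(x - p) - (y - q)‖ ^ 2
        + 2 * inner ℝ ((x - p) - (y - q)) (p - q) + ‖p - q‖ ^ 2 := by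
      have : x - y = ((x - p) - (y - q)) + (p - q) := by abel
      rw [this, norm_add_sq_real]
    have hstep : ‖p - q‖ ^ 2 - ‖x - y‖ ^ 2
        ≤ 2 * inner ℝ (x - p) (q - p) + 2 * inner ℝ (y - q) (p - q) := by
      have hsq : (0:ℝ) ≤ ‖(x - p) - (y - q)‖ ^ 2 := sq_nonneg _
      have : (inner ℝ ((x - p) - (y - q)) (p - q) : ℝ)
          = - inner ℝ (x - p) (q - p) - inner ℝ (y - q) (p - q) := by
        rw [inner_sub_left]
        have h1 : (inner ℝ (x - p) (q - p) : ℝ) = - inner ℝ (x - p) (p - q) := by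
          rw [← inner_neg_right]; congr 1; abel
        rw [h1]; ring
      nlinarith [hexp, hsq, this]
    have hxA : infDist x A = ‖x - p‖ := isProj_infDist hp
    have hyB : infDist y B = ‖y - q‖ := isProj_infDist hq
    have hqA : infDist q A = ‖q - q'‖ := isProj_infDist hq'
    have hpB : infDist p B = ‖p - p'‖ := isProj_infDist hp'
    rw [hxA, hyB, hqA, hpB]
    nlinarith [hstep, h1, h2]
  -- pass to ENNReal
  have hA' : EMetric.infEdist q A ≠ ⊤ := Metric.infEdist_ne_top hA.1
  have hB' : EMetric.infEdist p B ≠ ⊤ := Metric.infEdist_ne_top hB.1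
  calc ENNReal.ofReal (‖p - q‖ ^ 2 - ‖x - y‖ ^ 2)
      ≤ ENNReal.ofReal (2 * (infDist x A * infDist q A)
          + 2 * (infDist y B * infDist p B)) := ENNReal.ofReal_le_ofReal key
    _ = ENNReal.ofReal (2 * (infDist x A * infDist q A))
          + ENNReal.ofReal (2 * (infDist y B * infDist p B)) := by
        rw [ENNReal.ofReal_add
            (mul_nonneg (by norm_num) (mul_nonneg infDist_nonneg infDist_nonneg))
            (mul_nonneg (by norm_num) (mul_nonneg infDist_nonneg infDist_nonneg))]
    _ ≤ 2 * ENNReal.ofReal (infDist x A) * excess B A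
          + 2 * ENNReal.ofReal (infDist y B) * excess A B := by
        gcongr ?_ + ?_
        · rw [ENNReal.ofReal_mul (by norm_num), ENNReal.ofReal_mul infDist_nonneg,
            ENNReal.ofReal_ofNat, ← mul_assoc]
          gcongr
          rw [Metric.infDist, ENNReal.ofReal_toReal (Metric.infEdist_ne_top hA.1)]
          exact infEdist_le_excess hq.1
        · rw [ENNReal.ofReal_mul (by norm_num), ENNReal.ofReal_mul infDist_nonneg,
            ENNReal.ofReal_ofNat, ← mul_assoc]
          gcongr
          rw [Metric.infDist, ENNReal.ofReal_toReal (Metric.infEdist_ne_top hB.1)]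
          exact infEdist_le_excess hp.1
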